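/- Fix an integer n ≥ 2 and a probability space (Ω, F, P). Let R_1, …, R_n be integrable random variables with values in (−1,∞), let F_i = σ(R_1,…,R_i), and let x_0 > 0. Define recursively a_n ≡ 1 and, for i = n−1, …, 1, a_i = 1 + 1/E[(1+R_{i+1})/a_{i+1} | F_i]. Then a_i is F_i-measurable with a_i > 1 almost surely for i = 1,…,n−1, and the consumption process defined by X_0 = x_0, C_i = X_{i−1}(1+R_i)/a_i, X_i = X_{i−1}(1+R_i) − C_i (i = 1,…,n) satisfies E[C_{i+1} | F_i] = C_i almost surely for every i = 1,…,n−1, provided each C_i is integrable; i.e., a martingale consumption strategy exists in discrete time. -/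

import Mathlib

open MeasureTheory

/-- The sigma-algebra `F_i = σ(R_1,…,R_i)` generated by the first `i` returns. -/
def returnFiltration {Ω : Type*} (R : ℕ → Ω → ℝ) (i : ℕ) : MeasurableSpace Ω :=
  ⨆ j ∈ Finset.Icc 1 i, MeasurableSpace.comap (R j) inferInstance

private lemma condexp_pos_of_pos' {Ω : Type*} {m m0 : MeasurableSpace Ω} (hm : m ≤ m0)
    {μ : Measure Ω} [IsFiniteMeasure μ] {f : Ω → ℝ}
    (hf : Integrable f μ) (hpos : ∀ᵐ ω ∂μ, 0 < f ω) :
    ∀ᵐ ω ∂μ, 0 < (μ[f|m]) ω := by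
  haveI : SigmaFinite (μ.trim hm) := inferInstance
  set g := μ[f|m] with hg
  set A : Set Ω := {ω | g ω ≤ 0} with hA
  have hAm : MeasurableSet[m] A := by
    have : A = g ⁻¹' Set.Iic 0 := rfl
    rw [this, hg]
    exact stronglyMeasurable_condExp.measurable measurableSet_Iic
  have hAm0 : MeasurableSet A := hm A hAm
  have h1 : ∫ ω in A, f ω ∂μ = ∫ ω in A, g ω ∂μ := (setIntegral_condExp hm hf hAm).symm
  have h2 : ∫ ω in A, g ω ∂μ ≤ 0 := setIntegral_nonpos hAm0 fun ω hω => hω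
  have h3 : 0 ≤ ∫ ω in A, f ω ∂μ :=
    setIntegral_nonneg_ae hAm0 ((hpos.mono fun ω h _ => h.le))
  have h4 : ∫ ω in A, f ω ∂μ = 0 := le_antisymm (h1 ▸ h2) h3
  have h5 : f =ᵐ[μ.restrict A] 0 :=
    (setIntegral_eq_zero_iff_of_nonneg_ae
      (ae_restrict_of_ae (hpos.mono fun ω h => h.le)) hf.integrableOn).mp h4
  have h6 : ∀ᵐ ω ∂μ.restrict A, False := by
    filter_upwards [h5, ae_restrict_of_ae hpos] with ω h0 hp
    exact absurd h0 (ne_of_gt hp)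
  have h7 : μ A = 0 := by
    have := (ae_iff.mp h6)
    simpa [Measure.restrict_apply_univ] using this
  have h8 : ∀ᵐ ω ∂μ, ω ∉ A := by
    rw [ae_iff]; simpa using h7
  filter_upwards [h8] with ω h
  simpa [hA, not_le] using h

/-- Existence of a martingale consumption strategy in discrete time: with the
wealth-to-consumption factors defined recursively by `a_n ≡ 1` and
`a_i = 1 + 1/E[(1+R_{i+1})/a_{i+1} | F_i]`, each `a_i` is `F_i`-measurable with
`a_i > 1` a.s., and the resulting consumption process satisfies
`E[C_{i+1} | F_i] = C_i` a.s. for `i = 1,…,n−1`, provided each `C_i` is integrable. -/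
theorem discrete_martingale_consumption_exists
    {Ω : Type*} [MeasurableSpace Ω] (μ : Measure Ω) [IsProbabilityMeasure μ]
    (n : ℕ) (hn : 2 ≤ n) (x₀ : ℝ) (hx₀ : 0 < x₀)
    (R a C X : ℕ → Ω → ℝ)
    (hR_meas : ∀ i, Measurable (R i))
    (hR_val : ∀ i ∈ Finset.Icc 1 n, ∀ ω, -1 < R i ω)
    (hR_int : ∀ i ∈ Finset.Icc 1 n, Integrable (R i) μ)
    (ha_n : a n = fun _ => 1)
    (ha_rec : ∀ i ∈ Finset.Icc 1 (n - 1),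
      a i = fun ω =>
        1 + 1 / (MeasureTheory.condExp (returnFiltration R i) μ
          (fun ω' => (1 + R (i + 1) ω') / a (i + 1) ω') ω))
    (hX0 : ∀ ω, X 0 ω = x₀)
    (hC : ∀ i ∈ Finset.Icc 1 n, ∀ ω, C i ω = X (i - 1) ω * (1 + R i ω) / a i ω)
    (hX : ∀ i ∈ Finset.Icc 1 n, ∀ ω, X i ω = X (i - 1) ω * (1 + R i ω) - C i ω)
    (hC_int : ∀ i ∈ Finset.Icc 1 n, Integrable (C i) μ) :
    (∀ i ∈ Finset.Icc 1 (n - 1),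
      StronglyMeasurable[returnFiltration R i] (a i) ∧ ∀ᵐ ω ∂μ, 1 < a i ω) ∧
    (∀ i ∈ Finset.Icc 1 (n - 1),
      μ[C (i + 1) | returnFiltration R i] =ᵐ[μ] C i) := by
  classical
  -- basic facts about the filtration
  have hF_le : ∀ i, returnFiltration R i ≤ ‹MeasurableSpace Ω› := by
    intro i
    exact iSup₂_le fun j _ => (hR_meas j).comap_le
  have hF_mono : ∀ {i j : ℕ}, i ≤ j → returnFiltration R i ≤ returnFiltration R j := by
    intro i j hij
    refine iSup₂_le fun k hk => ?_
    have hk' : k ∈ Finset.Icc 1 j := by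
      simp only [Finset.mem_Icc] at hk ⊢; omega
    exact le_iSup₂ (f := fun k (_ : k ∈ Finset.Icc 1 j) =>
      MeasurableSpace.comap (R k) inferInstance) k hk'
  have hR_F : ∀ i : ℕ, 1 ≤ i → Measurable[returnFiltration R i] (R i) := by
    intro i hi
    have hmem : i ∈ Finset.Icc 1 i := by simp [hi]
    have hle : MeasurableSpace.comap (R i) inferInstance ≤ returnFiltration R i :=
      le_iSup₂ (f := fun k (_ : k ∈ Finset.Icc 1 i) =>
        MeasurableSpace.comap (R k) inferInstance) i hmem
    exact fun s hs => hle _ ⟨s, hs, rfl⟩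
  -- one step of the backward recursion
  have step : ∀ i : ℕ, 1 ≤ i → i ≤ n - 1 → Measurable (a (i + 1)) →
      (∀ᵐ ω ∂μ, 1 ≤ a (i + 1) ω) →
      StronglyMeasurable[returnFiltration R i] (a i) ∧ (∀ᵐ ω ∂μ, 1 < a i ω) ∧
      Integrable (fun ω' => (1 + R (i + 1) ω') / a (i + 1) ω') μ ∧
      (∀ᵐ ω ∂μ, 0 < (μ[(fun ω' => (1 + R (i + 1) ω') / a (i + 1) ω') |
        returnFiltration R i]) ω) := by
    intro i h1 h2 hmeas hge
    have hi1n : i + 1 ∈ Finset.Icc 1 n := by simp only [Finset.mem_Icc]; omega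
    have hRpos : ∀ ω, 0 < 1 + R (i + 1) ω := fun ω => by
      have := hR_val (i + 1) hi1n ω; linarith
    have hfpos : ∀ᵐ ω ∂μ, 0 < (1 + R (i + 1) ω) / a (i + 1) ω := by
      filter_upwards [hge] with ω h
      exact div_pos (hRpos ω) (by linarith)
    have hbound_int : Integrable (fun ω => 1 + R (i + 1) ω) μ :=
      (integrable_const 1).add (hR_int (i + 1) hi1n)
    have hfint : Integrable (fun ω' => (1 + R (i + 1) ω') / a (i + 1) ω') μ := by
      refine Integrable.mono hbound_int
        ((measurable_const.add (hR_meas (i + 1))).div hmeas).aestronglyMeasurable ?_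
      filter_upwards [hge] with ω h
      rw [Real.norm_eq_abs, Real.norm_eq_abs, abs_of_pos (hRpos ω)]
      rw [abs_of_nonneg (le_of_lt (div_pos (hRpos ω) (by linarith)))]
      exact div_le_self (hRpos ω).le h
    have hgpos := condexp_pos_of_pos' (hF_le i) hfint hfpos
    have hmem : i ∈ Finset.Icc 1 (n - 1) := by simp only [Finset.mem_Icc]; omega
    have haiM : StronglyMeasurable[returnFiltration R i] (a i) := by
      rw [ha_rec i hmem]
      exact (measurable_const.add
        (measurable_const.div stronglyMeasurable_condExp.measurable)).stronglyMeasurable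
    refine ⟨haiM, ?_, hfint, hgpos⟩
    filter_upwards [hgpos] with ω hω
    rw [ha_rec i hmem]
    have : 0 < 1 / (MeasureTheory.condExp (returnFiltration R i) μ
        (fun ω' => (1 + R (i + 1) ω') / a (i + 1) ω') ω) := by
      exact one_div_pos.mpr hω
    linarith
  -- backward induction
  have main : ∀ d i : ℕ, 1 ≤ i → i + d = n - 1 →
      StronglyMeasurable[returnFiltration R i] (a i) ∧ (∀ᵐ ω ∂μ, 1 < a i ω) ∧
      Integrable (fun ω' => (1 + R (i + 1) ω') / a (i + 1) ω') μ ∧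
      (∀ᵐ ω ∂μ, 0 < (μ[(fun ω' => (1 + R (i + 1) ω') / a (i + 1) ω') |
        returnFiltration R i]) ω) := by
    intro d
    induction d with
    | zero =>
      intro i h1 hd
      have hin : i + 1 = n := by omega
      refine step i h1 (by omega) ?_ ?_
      · rw [hin, ha_n]; exact measurable_const
      · rw [hin, ha_n]; exact ae_of_all μ fun ω => le_refl 1
    | succ d ih =>
      intro i h1 hd
      obtain ⟨hM, hgt, _, _⟩ := ih (i + 1) (by omega) (by omega)
      refine step i h1 (by omega) (hM.measurable.mono (hF_le (i + 1)) le_rfl) ?_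
      exact hgt.mono fun ω h => h.le
  have main' : ∀ i ∈ Finset.Icc 1 (n - 1),
      StronglyMeasurable[returnFiltration R i] (a i) ∧ (∀ᵐ ω ∂μ, 1 < a i ω) ∧
      Integrable (fun ω' => (1 + R (i + 1) ω') / a (i + 1) ω') μ ∧
      (∀ᵐ ω ∂μ, 0 < (μ[(fun ω' => (1 + R (i + 1) ω') / a (i + 1) ω') |
        returnFiltration R i]) ω) := by
    intro i hi
    rw [Finset.mem_Icc] at hi
    exact main (n - 1 - i) i hi.1 (by omega)
  -- measurability of the wealth process
  have hXmeas : ∀ j : ℕ, j ≤ n - 1 → Measurable[returnFiltration R j] (X j) := by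
    intro j
    induction j with
    | zero =>
      intro _
      have : X 0 = fun _ => x₀ := funext hX0
      rw [this]; exact measurable_const
    | succ j ih =>
      intro hj
      have hXj : Measurable[returnFiltration R (j + 1)] (X j) :=
        (ih (by omega)).mono (hF_mono (Nat.le_succ j)) le_rfl
      have hjn : j + 1 ∈ Finset.Icc 1 n := by simp only [Finset.mem_Icc]; omega
      have hjn1 : j + 1 ∈ Finset.Icc 1 (n - 1) := by simp only [Finset.mem_Icc]; omega
      have haj : Measurable[returnFiltration R (j + 1)] (a (j + 1)) :=
        ((main' (j + 1) hjn1).1).measurable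
      have hRj : Measurable[returnFiltration R (j + 1)] (R (j + 1)) := hR_F (j + 1) (by omega)
      have hXeq : X (j + 1) = fun ω =>
          X j ω * (1 + R (j + 1) ω) - X j ω * (1 + R (j + 1) ω) / a (j + 1) ω := by
        funext ω
        rw [hX (j + 1) hjn ω, hC (j + 1) hjn ω]
        simp
      rw [hXeq]
      exact (hXj.mul (measurable_const.add hRj)).sub
        ((hXj.mul (measurable_const.add hRj)).div haj)
  refine ⟨fun i hi => ⟨(main' i hi).1, (main' i hi).2.1⟩, ?_⟩
  -- the martingale property
  intro i hi
  have hi' := hi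
  rw [Finset.mem_Icc] at hi'
  obtain ⟨h1, h2⟩ := hi'
  have hin : i ∈ Finset.Icc 1 n := by simp only [Finset.mem_Icc]; omega
  have hi1n : i + 1 ∈ Finset.Icc 1 n := by simp only [Finset.mem_Icc]; omega
  obtain ⟨haiM, hai1, hfint, hgpos⟩ := main' i hi
  set f : Ω → ℝ := fun ω' => (1 + R (i + 1) ω') / a (i + 1) ω' with hf_def
  set g : Ω → ℝ := μ[f | returnFiltration R i] with hg_def
  -- C i is F_i-measurable
  have hCiM : Measurable[returnFiltration R i] (C i) := by
    have hXi : Measurable[returnFiltration R i] (X (i - 1)) :=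
      (hXmeas (i - 1) (by omega)).mono (hF_mono (by omega)) le_rfl
    have hCeq : C i = fun ω => X (i - 1) ω * (1 + R i ω) / a i ω := funext (hC i hin)
    rw [hCeq]
    exact (hXi.mul (measurable_const.add (hR_F i h1))).div haiM.measurable
  set φ : Ω → ℝ := fun ω => C i ω * (a i ω - 1) with hφ_def
  have hφM : StronglyMeasurable[returnFiltration R i] φ :=
    (hCiM.mul (haiM.measurable.sub measurable_const)).stronglyMeasurable
  -- a.e. identity C_{i+1} = φ * f
  have hae : C (i + 1) =ᵐ[μ] φ * f := by
    filter_upwards [hai1] with ω hω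
    have ha0 : a i ω ≠ 0 := by linarith
    have hXi : X i ω = C i ω * (a i ω - 1) := by
      rw [hX i hin ω, hC i hin ω]
      field_simp
    show C (i + 1) ω = φ ω * f ω
    rw [hC (i + 1) hi1n ω]
    simp only [Nat.add_sub_cancel, hφ_def, hf_def, hXi]
    rw [mul_div_assoc]
  have hφf_int : Integrable (φ * f) μ := (hC_int (i + 1) hi1n).congr hae
  have hpull : μ[φ * f | returnFiltration R i] =ᵐ[μ] φ * g :=
    condExp_mul_of_stronglyMeasurable_left hφM hφf_int hfint
  have hcongr : μ[C (i + 1) | returnFiltration R i] =ᵐ[μ] μ[φ * f | returnFiltration R i] :=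
    condExp_congr_ae hae
  refine hcongr.trans (hpull.trans ?_)
  -- φ * g = C i a.e.
  have hai_eq : ∀ ω, a i ω = 1 + 1 / g ω := by
    intro ω
    rw [ha_rec i hi]
  filter_upwards [hgpos] with ω hω
  show φ ω * g ω = C i ω
  rw [hφ_def]
  simp only
  rw [hai_eq ω]
  field_simp
  ring
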